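/- For all integers n ≥ k ≥ 1, N(n,k) = ∑_{j=1}^{k} C(n-j, k-j) · (-1)^{k-j} · w(n,j), where N(n,k) is the Narayana number. -/

import Mathlib

/-- `w(n,j) = C(n-1,j-1)·C(n+j,j) − C(n,j)·C(n+j,j-1)`. -/
def w (n j : ℕ) : ℤ :=
  ((n - 1).choose (j - 1) * (n + j).choose j : ℤ) - (n.choose j * (n + j).choose (j - 1) : ℤ)

/-- The Narayana number `N(n,k) = (1/n)·C(n,k)·C(n,k-1)`. -/
def narayana (n k : ℕ) : ℚ := ((n.choose k * n.choose (k - 1) : ℕ) : ℚ) / n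

/- Basic absorption identities over ℚ. -/
lemma qB' (x y : ℕ) : (x : ℚ) * ((x - 1).choose y) = ((y : ℚ) + 1) * (x.choose (y + 1)) := by
  cases x with
  | zero => simp
  | succ x =>
    have h := Nat.add_one_mul_choose_eq x y
    have h2 : (x + 1) * x.choose y = (y + 1) * ((x + 1).choose (y + 1)) :=
      h.trans (Nat.mul_comm _ _)
    simp only [Nat.add_sub_cancel]
    exact_mod_cast h2

lemma qC' (x y : ℕ) (h : y ≤ x) :
    ((x.choose (y + 1)) : ℚ) * ((y : ℚ) + 1) = (x.choose y) * ((x : ℚ) - (y : ℚ)) := by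
  have h1 := Nat.choose_succ_right_eq x y
  have h2 := congrArg (fun t : ℕ => (t : ℚ)) h1
  push_cast [Nat.cast_sub h] at h2
  linear_combination h2

lemma qA' (x y : ℕ) (h : y ≤ x) :
    (x : ℚ) * ((x - 1).choose y) = (x.choose y) * ((x : ℚ) - (y : ℚ)) := by
  rw [qB']
  rw [mul_comm ((y : ℚ) + 1) _]
  exact qC' x y h

/-- Telescoping lemma: partial sums of the Zeilberger certificate. -/
lemma tele (n k : ℕ) (hk : 1 ≤ k) (hkn : k < n) :
    ∀ m, 1 ≤ m → m ≤ k →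
      ∑ j ∈ Finset.Icc 1 m,
        (((k : ℚ) * ((k : ℚ) + 1) * ((n - j).choose (k + 1 - j))
          - ((n : ℚ) - k) * ((n : ℚ) + k + 1) * ((n - j).choose (k - j)))
          * (n.choose j) * (n.choose (j - 1)))
      = -(n : ℚ) ^ 2 * ((n - 1).choose m) * ((n - 1).choose (m - 1))
          * ((n - m - 1).choose (k - m)) := by
  intro m hm
  induction m, hm using Nat.le_induction with
  | base =>
    intro _
    have hn : 1 ≤ n := by omega
    rw [Finset.Icc_self, Finset.sum_singleton]
    have rA : ((n - 1).choose k : ℚ) * k = ((n - 1).choose (k - 1)) * ((n : ℚ) - k) := by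
      have h1 := qC' (n - 1) (k - 1) (by omega)
      rw [show k - 1 + 1 = k by omega] at h1
      push_cast [Nat.cast_sub (show 1 ≤ k by omega), Nat.cast_sub (show 1 ≤ n by omega)] at h1
      linear_combination h1
    have rB : ((n : ℚ) - 1) * ((n - 1 - 1).choose (k - 1))
        = ((n - 1).choose (k - 1)) * ((n : ℚ) - k) := by
      have h1 := qA' (n - 1) (k - 1) (by omega)
      push_cast [Nat.cast_sub (show 1 ≤ k by omega), Nat.cast_sub (show 1 ≤ n by omega)] at h1
      linear_combination h1
    have e1 : (1 : ℕ) - 1 = 0 := rfl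
    have e2 : k + 1 - 1 = k := by omega
    rw [e1, e2]
    simp only [Nat.choose_zero_right, Nat.choose_one_right, Nat.cast_one, mul_one]
    have hcast : (((n - 1 : ℕ) : ℚ)) = (n : ℚ) - 1 := by
      push_cast [Nat.cast_sub hn]; ring
    rw [hcast]
    linear_combination ((n : ℚ) * ((k : ℚ) + 1)) * rA + (n : ℚ) ^ 2 * rB
  | succ m hm IH =>
    intro hmk
    have hn : 1 ≤ n := by omega
    rw [Finset.sum_Icc_succ_top (show (1 : ℕ) ≤ m + 1 by omega), IH (by omega)]
    simp only [show k + 1 - (m + 1) = k - m by omega, show n - (m + 1) = n - m - 1 by omega,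
      show (m + 1) - 1 = m by omega, show k - (m + 1) = k - m - 1 by omega]
    -- atoms
    set a : ℚ := (n.choose (m + 1) : ℚ) with ha
    set b : ℚ := (n.choose m : ℚ) with hb
    set c : ℚ := ((n - m - 1).choose (k - m - 1) : ℚ) with hc
    set u : ℚ := ((n - m - 1).choose (k - m) : ℚ) with hu
    set v : ℚ := ((n - 1).choose (m + 1) : ℚ) with hv
    set w1 : ℚ := ((n - 1).choose m : ℚ) with hw1
    set x1 : ℚ := ((n - 1).choose (m - 1) : ℚ) with hx1
    set y1 : ℚ := ((n - m - 1 - 1).choose (k - m - 1) : ℚ) with hy1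
    have hU : ((k : ℚ) - m) * u = ((n : ℚ) - k) * c := by
      have h1 := qC' (n - m - 1) (k - m - 1) (by omega)
      rw [show k - m - 1 + 1 = k - m by omega] at h1
      push_cast [Nat.cast_sub (show m + 1 ≤ k by omega), Nat.cast_sub (show m + 1 ≤ n by omega),
        Nat.cast_sub (show 1 ≤ k - m by omega), Nat.cast_sub (show m ≤ n by omega),
        Nat.cast_sub (show 1 ≤ n - m by omega), Nat.cast_sub (show m ≤ k by omega)] at h1
      rw [← hu, ← hc] at h1
      linear_combination h1
    have hV : (n : ℚ) * v = ((n : ℚ) - m - 1) * a := by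
      have h1 := qA' n (m + 1) (by omega)
      push_cast at h1
      rw [← hv, ← ha] at h1
      linear_combination h1
    have hW : (n : ℚ) * w1 = ((m : ℚ) + 1) * a := by
      have h1 := qB' n m
      rw [← hw1, ← ha] at h1
      linear_combination h1
    have hW' : (n : ℚ) * w1 = ((n : ℚ) - m) * b := by
      have h1 := qA' n m (by omega)
      rw [← hw1, ← hb] at h1
      linear_combination h1
    have hX : (n : ℚ) * x1 = (m : ℚ) * b := by
      have h1 := qB' n (m - 1)
      rw [show m - 1 + 1 = m by omega] at h1
      push_cast [Nat.cast_sub (show 1 ≤ m by omega)] at h1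
      rw [← hx1, ← hb] at h1
      linear_combination h1
    have hY : ((n : ℚ) - m - 1) * y1 = ((n : ℚ) - k) * c := by
      have h1 := qA' (n - m - 1) (k - m - 1) (by omega)
      push_cast [Nat.cast_sub (show m + 1 ≤ k by omega), Nat.cast_sub (show m + 1 ≤ n by omega),
        Nat.cast_sub (show m ≤ n by omega), Nat.cast_sub (show 1 ≤ n - m by omega),
        Nat.cast_sub (show m ≤ k by omega), Nat.cast_sub (show 1 ≤ k - m by omega)] at h1
      rw [← hy1, ← hc] at h1
      linear_combination h1
    have hkq : (0 : ℚ) < (k : ℚ) - m := by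
      have : (m : ℚ) < k := by exact_mod_cast (show m < k by omega)
      linarith
    have hnq : (0 : ℚ) < (n : ℚ) - m - 1 := by
      have : ((m + 1 : ℕ) : ℚ) < n := by exact_mod_cast (show m + 1 < n by omega)
      push_cast at this; linarith
    have hn0 : (0 : ℚ) < (n : ℚ) := by exact_mod_cast (show 0 < n by omega)
    refine mul_left_cancel₀
      (show ((n : ℚ) ^ 2 * ((k : ℚ) - m) * ((n : ℚ) - m - 1)) ≠ 0 from
        ne_of_gt (by positivity)) ?_
    linear_combination
      ((n : ℚ) ^ 2 * ((n : ℚ) - m - 1) * k * ((k : ℚ) + 1) * a * b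
        - (n : ℚ) ^ 4 * ((n : ℚ) - m - 1) * w1 * x1) * hU
      + ((n : ℚ) ^ 3 * ((k : ℚ) - m) * ((n : ℚ) - m - 1) * w1 * y1) * hV
      + ((n : ℚ) ^ 2 * ((k : ℚ) - m) * ((n : ℚ) - m - 1) ^ 2 * a * y1) * hW'
      + ((n : ℚ) ^ 2 * ((k : ℚ) - m) * ((n : ℚ) - m - 1) * ((n : ℚ) - m) * a * b) * hY
      + (-(n : ℚ) ^ 3 * ((n : ℚ) - m - 1) * ((n : ℚ) - k) * c * x1) * hW
      + (-(n : ℚ) ^ 2 * ((n : ℚ) - m - 1) * ((n : ℚ) - k) * ((m : ℚ) + 1) * a * c) * hX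

/-- The Zeilberger recurrence for the sum. -/
lemma recur (n k : ℕ) (hk : 1 ≤ k) (hkn : k < n) :
    (k : ℚ) * ((k : ℚ) + 1)
        * ∑ j ∈ Finset.Icc 1 (k + 1),
            ((n - j).choose (k + 1 - j) : ℚ) * (n.choose j) * (n.choose (j - 1))
      = ((n : ℚ) - k) * ((n : ℚ) + k + 1)
        * ∑ j ∈ Finset.Icc 1 k,
            ((n - j).choose (k - j) : ℚ) * (n.choose j) * (n.choose (j - 1)) := by
  have T := tele n k hk hkn k hk le_rfl
  have Tsplit :
      (k : ℚ) * ((k : ℚ) + 1)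
          * ∑ j ∈ Finset.Icc 1 k,
              ((n - j).choose (k + 1 - j) : ℚ) * (n.choose j) * (n.choose (j - 1))
        - ((n : ℚ) - k) * ((n : ℚ) + k + 1)
          * ∑ j ∈ Finset.Icc 1 k,
              ((n - j).choose (k - j) : ℚ) * (n.choose j) * (n.choose (j - 1))
      = -(n : ℚ) ^ 2 * ((n - 1).choose k) * ((n - 1).choose (k - 1))
          * ((n - k - 1).choose (k - k)) := by
    rw [Finset.mul_sum, Finset.mul_sum, ← Finset.sum_sub_distrib]
    rw [← T]
    apply Finset.sum_congr rfl
    intro j hj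
    ring
  rw [Finset.sum_Icc_succ_top (show (1 : ℕ) ≤ k + 1 by omega)]
  rw [show k + 1 - (k + 1) = 0 by omega, show (k + 1) - 1 = k by omega, Nat.sub_self] at *
  simp only [Nat.choose_zero_right, Nat.cast_one] at *
  have hb1 : (n : ℚ) * ((n - 1).choose k) = ((k : ℚ) + 1) * (n.choose (k + 1)) := qB' n k
  have hb2 : (n : ℚ) * ((n - 1).choose (k - 1)) = (k : ℚ) * (n.choose k) := by
    have h1 := qB' n (k - 1)
    rw [show k - 1 + 1 = k by omega] at h1
    push_cast [Nat.cast_sub (show 1 ≤ k by omega)] at h1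
    linear_combination h1
  linear_combination Tsplit + (-(n : ℚ) * ((n - 1).choose (k - 1))) * hb1
    + (-((k : ℚ) + 1) * (n.choose (k + 1))) * hb2

/-- Closed form of the sum. -/
lemma closed (n : ℕ) : ∀ k, 1 ≤ k → k ≤ n →
    ((n : ℚ) + 1) * ∑ j ∈ Finset.Icc 1 k,
        ((n - j).choose (k - j) : ℚ) * (n.choose j) * (n.choose (j - 1))
      = (n : ℚ) * ((n - 1).choose (k - 1)) * ((n + k).choose k) := by
  intro k hk
  induction k, hk using Nat.le_induction with
  | base =>
    intro hn
    rw [Finset.Icc_self, Finset.sum_singleton]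
    simp only [Nat.sub_self, Nat.choose_zero_right, Nat.choose_one_right, Nat.cast_one]
    push_cast
    ring
  | succ k hk IH =>
    intro hkn
    have hkn' : k < n := by omega
    have R := recur n k hk hkn'
    have I := IH (by omega)
    rw [show (k + 1) - 1 = k by omega]
    have s1 : (k : ℚ) * ((n - 1).choose k) = ((n : ℚ) - k) * ((n - 1).choose (k - 1)) := by
      have h1 := qC' (n - 1) (k - 1) (by omega)
      rw [show k - 1 + 1 = k by omega] at h1
      push_cast [Nat.cast_sub (show 1 ≤ k by omega), Nat.cast_sub (show 1 ≤ n by omega)] at h1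
      linear_combination h1
    have s2 : ((k : ℚ) + 1) * ((n + k + 1).choose (k + 1))
        = ((n : ℚ) + k + 1) * ((n + k).choose k) := by
      have h1 := qB' (n + k + 1) k
      rw [show n + k + 1 - 1 = n + k by omega] at h1
      push_cast at h1
      linear_combination -h1
    have hk0 : ((k : ℚ) * ((k : ℚ) + 1)) ≠ 0 := by
      have : (0 : ℚ) < (k : ℚ) := by exact_mod_cast (show 0 < k by omega)
      positivity
    refine mul_left_cancel₀ hk0 ?_
    have harg : n + (k + 1) = n + k + 1 := by omega
    rw [harg]
    linear_combination ((n : ℚ) + 1) * R + (((n : ℚ) - k) * ((n : ℚ) + k + 1)) * I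
      - (n : ℚ) * ((k : ℚ) + 1) * (((n + k + 1).choose (k + 1) : ℚ)) * s1
      - (n : ℚ) * (((n : ℚ) - k)) * (((n - 1).choose (k - 1) : ℚ)) * s2

/-- `(n+1)·w(n,k) = C(n-1,k-1)·C(n+k,k)`. -/
lemma wq (n k : ℕ) (hk : 1 ≤ k) (hkn : k ≤ n) :
    ((n : ℚ) + 1) * ((w n k : ℤ) : ℚ)
      = ((n - 1).choose (k - 1) : ℚ) * ((n + k).choose k) := by
  have r1 : (n : ℚ) * ((n - 1).choose (k - 1)) = (k : ℚ) * (n.choose k) := by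
    have h1 := qB' n (k - 1)
    rw [show k - 1 + 1 = k by omega] at h1
    push_cast [Nat.cast_sub (show 1 ≤ k by omega)] at h1
    linear_combination h1
  have r2 : (k : ℚ) * ((n + k).choose k) = ((n : ℚ) + 1) * ((n + k).choose (k - 1)) := by
    have h1 := qC' (n + k) (k - 1) (by omega)
    rw [show k - 1 + 1 = k by omega] at h1
    push_cast [Nat.cast_sub (show 1 ≤ k by omega)] at h1
    linear_combination h1
  have hk0 : ((k : ℚ)) ≠ 0 := by
    have : (0 : ℚ) < (k : ℚ) := by exact_mod_cast (show 0 < k by omega)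
    positivity
  unfold w
  push_cast
  refine mul_left_cancel₀ hk0 ?_
  linear_combination ((k : ℚ) * ((n + k).choose k)) * r1 + ((k : ℚ) * (n.choose k)) * r2

/-- The dual identity: `w(n,k) = ∑_{j=1}^k C(n-j,k-j)·N(n,j)`. -/
lemma dual (n k : ℕ) (hk : 1 ≤ k) (hkn : k ≤ n) :
    ((w n k : ℤ) : ℚ)
      = ∑ j ∈ Finset.Icc 1 k, ((n - j).choose (k - j) : ℚ) * narayana n j := by
  have hn : 1 ≤ n := le_trans hk hkn
  have hn0 : ((n : ℚ)) ≠ 0 := by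
    have : (0 : ℚ) < (n : ℚ) := by exact_mod_cast (show 0 < n by omega)
    positivity
  have hS : ∑ j ∈ Finset.Icc 1 k, ((n - j).choose (k - j) : ℚ) * narayana n j
      = (∑ j ∈ Finset.Icc 1 k,
          ((n - j).choose (k - j) : ℚ) * (n.choose j) * (n.choose (j - 1))) / n := by
    rw [Finset.sum_div]
    apply Finset.sum_congr rfl
    intro j hj
    unfold narayana
    push_cast
    ring
  rw [hS, eq_div_iff hn0]
  have W := wq n k hk hkn
  have C := closed n k hk hkn
  have hn1 : ((n : ℚ) + 1) ≠ 0 := by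
    have : (0 : ℚ) < (n : ℚ) := by exact_mod_cast (show 0 < n by omega)
    positivity
  refine mul_left_cancel₀ hn1 ?_
  linear_combination (n : ℚ) * W - C

/-- Orthogonality of the binomial transform. -/
lemma orth (n k i : ℕ) (hi : 1 ≤ i) (hik : i ≤ k) (hkn : k ≤ n) :
    ∑ j ∈ Finset.Icc i k,
        ((n - j).choose (k - j) : ℚ) * (-1 : ℚ) ^ (k - j) * ((n - i).choose (j - i) : ℚ)
      = if k = i then 1 else 0 := by
  have key : ∑ j ∈ Finset.Icc i k,
      ((n - j).choose (k - j) : ℚ) * (-1 : ℚ) ^ (k - j) * ((n - i).choose (j - i) : ℚ)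
      = ∑ a ∈ Finset.range (k - i + 1),
          (((n - i).choose (k - i) : ℚ) * (-1 : ℚ) ^ (k - i))
            * ((-1 : ℚ) ^ a * ((k - i).choose a : ℚ)) := by
    refine Finset.sum_nbij' (fun j => j - i) (fun a => i + a) ?_ ?_ ?_ ?_ ?_
    · intro j hj; simp only [Finset.mem_Icc] at hj; simp only [Finset.mem_range]; omega
    · intro a ha; simp only [Finset.mem_range] at ha; simp only [Finset.mem_Icc]; omega
    · intro j hj; simp only [Finset.mem_Icc] at hj; show i + (j - i) = j; omega
    · intro a ha; simp only [Finset.mem_range] at ha; show i + a - i = a; omega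
    · intro j hj
      simp only [Finset.mem_Icc] at hj
      have hmul := Nat.choose_mul (n := n - i) (show j - i ≤ k - i by omega)
      have hmulq : (((n - i).choose (k - i) : ℚ)) * (((k - i).choose (j - i) : ℚ))
          = (((n - i).choose (j - i) : ℚ)) * ((((n - i) - (j - i)).choose ((k - i) - (j - i)) : ℚ)) := by
        exact_mod_cast hmul
      rw [show n - j = (n - i) - (j - i) by omega, show k - j = (k - i) - (j - i) by omega]
      have hsq : (-1 : ℚ) ^ (j - i) * (-1 : ℚ) ^ (j - i) = 1 := by
        rw [← pow_add, ← two_mul, pow_mul]; norm_num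
      have hsign : (-1 : ℚ) ^ ((k - i) - (j - i)) * (-1 : ℚ) ^ (j - i) = (-1 : ℚ) ^ (k - i) := by
        rw [← pow_add]; congr 1; omega
      have hs2 : (-1 : ℚ) ^ ((k - i) - (j - i)) = (-1 : ℚ) ^ (k - i) * (-1 : ℚ) ^ (j - i) := by
        calc (-1 : ℚ) ^ ((k - i) - (j - i))
            = (-1 : ℚ) ^ ((k - i) - (j - i)) * ((-1 : ℚ) ^ (j - i) * (-1 : ℚ) ^ (j - i)) := by
              rw [hsq, mul_one]
          _ = ((-1 : ℚ) ^ ((k - i) - (j - i)) * (-1 : ℚ) ^ (j - i)) * (-1 : ℚ) ^ (j - i) := by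
              ring
          _ = (-1 : ℚ) ^ (k - i) * (-1 : ℚ) ^ (j - i) := by rw [hsign]
      rw [hs2]
      linear_combination (-((-1 : ℚ) ^ (k - i) * (-1 : ℚ) ^ (j - i))) * hmulq
  rw [key, ← Finset.mul_sum]
  by_cases hr0 : k - i = 0
  · have hki : k = i := by omega
    subst hki
    simp
  · have halt : ∑ a ∈ Finset.range ((k - i) + 1), ((-1 : ℚ) ^ a * ((k - i).choose a : ℚ)) = 0 := by
      have h := Int.alternating_sum_range_choose_of_ne hr0
      have h2 : ((∑ a ∈ Finset.range ((k - i) + 1),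
          ((-1 : ℤ) ^ a * ((k - i).choose a : ℤ)) : ℤ) : ℚ) = 0 := by rw [h]; simp
      push_cast at h2
      exact h2
    rw [halt, mul_zero, if_neg (by omega)]

/-- For `n ≥ k ≥ 1`, `N(n,k) = ∑_{j=1}^{k} C(n-j,k-j)·(-1)^{k-j}·w(n,j)`. -/
theorem narayana_eq_sum_w (n k : ℕ) (hk : 1 ≤ k) (hkn : k ≤ n) :
    narayana n k
      = ∑ j ∈ Finset.Icc 1 k, ((n - j).choose (k - j) : ℚ) * (-1 : ℚ) ^ (k - j) * (w n j : ℚ) := by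
  have step1 : ∑ j ∈ Finset.Icc 1 k,
      ((n - j).choose (k - j) : ℚ) * (-1 : ℚ) ^ (k - j) * (w n j : ℚ)
      = ∑ j ∈ Finset.Icc 1 k, ∑ i ∈ Finset.Icc 1 k,
          (if i ≤ j then
            ((n - j).choose (k - j) : ℚ) * (-1 : ℚ) ^ (k - j)
              * (((n - i).choose (j - i) : ℚ) * narayana n i)
           else 0) := by
    apply Finset.sum_congr rfl
    intro j hj
    simp only [Finset.mem_Icc] at hj
    rw [dual n j hj.1 (le_trans hj.2 hkn)]
    rw [Finset.mul_sum]
    rw [show Finset.Icc 1 j = (Finset.Icc 1 k).filter (· ≤ j) from by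
      ext x; simp [Finset.mem_Icc, Finset.mem_filter]; omega]
    rw [Finset.sum_filter]
  rw [step1, Finset.sum_comm]
  have step2 : ∀ i ∈ Finset.Icc 1 k,
      ∑ j ∈ Finset.Icc 1 k,
        (if i ≤ j then
          ((n - j).choose (k - j) : ℚ) * (-1 : ℚ) ^ (k - j)
            * (((n - i).choose (j - i) : ℚ) * narayana n i)
         else 0)
      = (if i = k then narayana n i else 0) := by
    intro i hi
    simp only [Finset.mem_Icc] at hi
    have : ∑ j ∈ Finset.Icc 1 k,
        (if i ≤ j then
          ((n - j).choose (k - j) : ℚ) * (-1 : ℚ) ^ (k - j)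
            * (((n - i).choose (j - i) : ℚ) * narayana n i)
         else 0)
        = narayana n i * ∑ j ∈ Finset.Icc i k,
            ((n - j).choose (k - j) : ℚ) * (-1 : ℚ) ^ (k - j) * ((n - i).choose (j - i) : ℚ) := by
      rw [Finset.mul_sum]
      rw [show Finset.Icc i k = (Finset.Icc 1 k).filter (i ≤ ·) from by
        ext x; simp [Finset.mem_Icc, Finset.mem_filter]; omega]
      rw [Finset.sum_filter]
      apply Finset.sum_congr rfl
      intro j hj
      by_cases hij : i ≤ j <;> simp [hij]
      ring
    rw [this, orth n k i hi.1 hi.2 hkn]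
    by_cases hik : i = k
    · rw [if_pos hik, if_pos (by omega), mul_one]
    · rw [if_neg (fun hh => hik (by omega)), if_neg hik, mul_zero]
  rw [Finset.sum_congr rfl step2]
  rw [Finset.sum_ite_eq' (Finset.Icc 1 k) k (fun i => narayana n i)]
  rw [if_pos (Finset.mem_Icc.mpr ⟨hk, le_refl k⟩)]
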